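/- Let 1 ≤ u ≤ v ≤ (log x)/e with x ≥ e, and let 𝒫 be a finite set of primes contained in (x^{1/(ev)}, x^{1/u}]. For any X ≥ x^{1/u}, there exists a positive integer ℓ ≤ K := (e v log X)/(log x) such that ∑ over ℓ-tuples (q₁,…,q_ℓ) ∈ 𝒫^ℓ with X·x^{−1/u} < q₁⋯q_ℓ ≤ X of 1/(q₁⋯q_ℓ) is at least (1/K)·(∑_{q∈𝒫} 1/q)^ℓ. -/

import Mathlib

open Finset Real Classical in
private lemma step_lem (P : Finset ℕ) (X Y : ℝ)
    (h2 : ∀ q ∈ P, (q : ℝ) * Y ≤ X) (n : ℕ) :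
    (∑ q ∈ P, 1 / (q:ℝ)) *
      (∑ q ∈ (Fintype.piFinset fun _ : Fin n => P).filter
          (fun q => ∏ i, (q i : ℝ) ≤ Y), 1 / ∏ i, (q i : ℝ))
    ≤ (∑ q ∈ (Fintype.piFinset fun _ : Fin (n+1) => P).filter
          (fun q => ∏ i, (q i : ℝ) ≤ Y), 1 / ∏ i, (q i : ℝ)) +
      (∑ q ∈ (Fintype.piFinset fun _ : Fin (n+1) => P).filter
          (fun q => Y < ∏ i, (q i : ℝ) ∧ ∏ i, (q i : ℝ) ≤ X), 1 / ∏ i, (q i : ℝ)) := by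
  classical
  have hEq : (∑ q ∈ P, 1 / (q:ℝ)) *
      (∑ q ∈ (Fintype.piFinset fun _ : Fin n => P).filter
          (fun q => ∏ i, (q i : ℝ) ≤ Y), 1 / ∏ i, (q i : ℝ))
      = ∑ r ∈ (Fintype.piFinset fun _ : Fin (n+1) => P).filter
          (fun r => ∏ i, (Fin.tail r i : ℝ) ≤ Y), 1 / ∏ i, (r i : ℝ) := by
    rw [Finset.sum_mul_sum, ← Finset.sum_product']
    refine Finset.sum_nbij' (fun pq => Fin.cons pq.1 pq.2) (fun r => (r 0, Fin.tail r))
      ?_ ?_ ?_ ?_ ?_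
    · rintro ⟨p, q⟩ hpq
      rw [Finset.mem_product, Finset.mem_filter, Fintype.mem_piFinset] at hpq
      rw [Finset.mem_filter, Fintype.mem_piFinset]
      refine ⟨fun i => ?_, ?_⟩
      · refine Fin.cases ?_ ?_ i
        · simpa using hpq.1
        · intro j; simpa using hpq.2.1 j
      · simpa [Fin.tail_cons] using hpq.2.2
    · intro r hr
      rw [Finset.mem_filter, Fintype.mem_piFinset] at hr
      rw [Finset.mem_product, Finset.mem_filter, Fintype.mem_piFinset]
      exact ⟨hr.1 0, fun i => hr.1 i.succ, hr.2⟩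
    · rintro ⟨p, q⟩ _; simp [Fin.tail_cons]
    · intro r _; simp [Fin.cons_self_tail]
    · rintro ⟨p, q⟩ _
      simp only
      rw [Fin.prod_univ_succ]
      simp only [Fin.cons_zero, Fin.cons_succ]
      rw [div_mul_div_comm, one_mul]
  rw [hEq]
  rw [← Finset.sum_filter_add_sum_filter_not
      ((Fintype.piFinset fun _ : Fin (n+1) => P).filter
        (fun r => ∏ i, (Fin.tail r i : ℝ) ≤ Y))
      (fun r => ∏ i, (r i : ℝ) ≤ Y)]
  apply add_le_add
  · refine Finset.sum_le_sum_of_subset_of_nonneg ?_ (fun r _ _ => by positivity)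
    intro r hr
    rw [Finset.mem_filter] at hr ⊢
    rw [Finset.mem_filter] at hr
    exact ⟨hr.1.1, hr.2⟩
  · refine Finset.sum_le_sum_of_subset_of_nonneg ?_ (fun r _ _ => by positivity)
    intro r hr
    rw [Finset.mem_filter] at hr ⊢
    rw [Finset.mem_filter] at hr
    obtain ⟨⟨hrA, hrtail⟩, hrfull⟩ := hr
    rw [not_le] at hrfull
    refine ⟨hrA, hrfull, ?_⟩
    have h0 : r 0 ∈ P := by
      rw [Fintype.mem_piFinset] at hrA; exact hrA 0
    have hprod : ∏ i, (r i : ℝ) = (r 0 : ℝ) * ∏ i, (Fin.tail r i : ℝ) := by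
      rw [Fin.prod_univ_succ]; rfl
    rw [hprod]
    calc (r 0 : ℝ) * ∏ i, (Fin.tail r i : ℝ) ≤ (r 0 : ℝ) * Y := by
          apply mul_le_mul_of_nonneg_left hrtail (by positivity)
      _ ≤ X := h2 _ h0

open Finset Real Classical in
private lemma ind_lem (P : Finset ℕ) (X Y : ℝ) (hY : 1 ≤ Y)
    (h2 : ∀ q ∈ P, (q : ℝ) * Y ≤ X) (hS0 : 0 ≤ ∑ q ∈ P, 1 / (q:ℝ)) :
    ∀ n : ℕ, (∑ q ∈ P, 1 / (q:ℝ)) ^ n ≤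
      (∑ q ∈ (Fintype.piFinset fun _ : Fin n => P).filter
          (fun q => ∏ i, (q i : ℝ) ≤ Y), 1 / ∏ i, (q i : ℝ)) +
      ∑ ℓ ∈ Finset.range n,
        (∑ q ∈ (Fintype.piFinset fun _ : Fin (ℓ+1) => P).filter
          (fun q => Y < ∏ i, (q i : ℝ) ∧ ∏ i, (q i : ℝ) ≤ X), 1 / ∏ i, (q i : ℝ)) *
        (∑ q ∈ P, 1 / (q:ℝ)) ^ (n - (ℓ+1)) := by
  classical
  intro n
  induction n with
  | zero =>
    simp only [pow_zero, Finset.range_zero, Finset.sum_empty, add_zero]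
    have : (Fintype.piFinset fun _ : Fin 0 => P).filter
        (fun q => ∏ i, (q i : ℝ) ≤ Y) = Fintype.piFinset fun _ : Fin 0 => P := by
      apply Finset.filter_true_of_mem
      intro q _
      simpa using hY
    rw [this]
    simp
  | succ n ih =>
    have key := step_lem P X Y h2 n
    set S := ∑ q ∈ P, 1 / (q:ℝ) with hSdef
    calc S ^ (n+1) = S * S ^ n := by ring
      _ ≤ S * ((∑ q ∈ (Fintype.piFinset fun _ : Fin n => P).filter
            (fun q => ∏ i, (q i : ℝ) ≤ Y), 1 / ∏ i, (q i : ℝ)) +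
          ∑ ℓ ∈ Finset.range n,
            (∑ q ∈ (Fintype.piFinset fun _ : Fin (ℓ+1) => P).filter
              (fun q => Y < ∏ i, (q i : ℝ) ∧ ∏ i, (q i : ℝ) ≤ X), 1 / ∏ i, (q i : ℝ)) *
            S ^ (n - (ℓ+1))) := mul_le_mul_of_nonneg_left ih hS0
      _ ≤ _ := by
        have hrw : ∀ ℓ ∈ Finset.range n,
            S * ((∑ q ∈ (Fintype.piFinset fun _ : Fin (ℓ+1) => P).filter
              (fun q => Y < ∏ i, (q i : ℝ) ∧ ∏ i, (q i : ℝ) ≤ X), 1 / ∏ i, (q i : ℝ)) *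
              S ^ (n - (ℓ+1)))
            = (∑ q ∈ (Fintype.piFinset fun _ : Fin (ℓ+1) => P).filter
              (fun q => Y < ∏ i, (q i : ℝ) ∧ ∏ i, (q i : ℝ) ≤ X), 1 / ∏ i, (q i : ℝ)) *
              S ^ (n + 1 - (ℓ+1)) := by
          intro ℓ hℓ
          rw [Finset.mem_range] at hℓ
          have : n + 1 - (ℓ+1) = (n - (ℓ+1)) + 1 := by omega
          rw [this, pow_succ]
          ring
        have hSV : S * ∑ ℓ ∈ Finset.range n,
            (∑ q ∈ (Fintype.piFinset fun _ : Fin (ℓ+1) => P).filter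
              (fun q => Y < ∏ i, (q i : ℝ) ∧ ∏ i, (q i : ℝ) ≤ X), 1 / ∏ i, (q i : ℝ)) *
              S ^ (n - (ℓ+1))
            = ∑ ℓ ∈ Finset.range n,
            (∑ q ∈ (Fintype.piFinset fun _ : Fin (ℓ+1) => P).filter
              (fun q => Y < ∏ i, (q i : ℝ) ∧ ∏ i, (q i : ℝ) ≤ X), 1 / ∏ i, (q i : ℝ)) *
              S ^ (n + 1 - (ℓ+1)) := by
          rw [Finset.mul_sum]
          exact Finset.sum_congr rfl hrw
        have hVsucc : ∑ ℓ ∈ Finset.range (n+1),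
            (∑ q ∈ (Fintype.piFinset fun _ : Fin (ℓ+1) => P).filter
              (fun q => Y < ∏ i, (q i : ℝ) ∧ ∏ i, (q i : ℝ) ≤ X), 1 / ∏ i, (q i : ℝ)) *
              S ^ (n + 1 - (ℓ+1))
            = (∑ ℓ ∈ Finset.range n,
            (∑ q ∈ (Fintype.piFinset fun _ : Fin (ℓ+1) => P).filter
              (fun q => Y < ∏ i, (q i : ℝ) ∧ ∏ i, (q i : ℝ) ≤ X), 1 / ∏ i, (q i : ℝ)) *
              S ^ (n + 1 - (ℓ+1)))
            + (∑ q ∈ (Fintype.piFinset fun _ : Fin (n+1) => P).filter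
              (fun q => Y < ∏ i, (q i : ℝ) ∧ ∏ i, (q i : ℝ) ≤ X), 1 / ∏ i, (q i : ℝ)) := by
          rw [Finset.sum_range_succ]
          congr 1
          have : n + 1 - (n + 1) = 0 := by omega
          rw [this, pow_zero, mul_one]
        rw [mul_add, hSV, hVsucc]
        linarith [key]

open Finset Real Classical in
theorem stmt_4 (x u v X : ℝ) (hx : Real.exp 1 ≤ x) (hu : 1 ≤ u) (huv : u ≤ v)
    (hv : v ≤ Real.log x / Real.exp 1)
    (P : Finset ℕ) (hPne : P.Nonempty)
    (hP : ∀ q ∈ P, Nat.Prime q ∧ x ^ (1 / (Real.exp 1 * v)) < (q : ℝ) ∧ (q : ℝ) ≤ x ^ (1 / u))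
    (hX : x ^ (1 / u) ≤ X) :
    ∃ ℓ : ℕ, 0 < ℓ ∧ (ℓ : ℝ) ≤ Real.exp 1 * v * Real.log X / Real.log x ∧
      ∑ q ∈ (Fintype.piFinset fun _ : Fin ℓ => P).filter
          (fun q => X * x ^ (-(1 / u)) < ∏ i, (q i : ℝ) ∧ ∏ i, (q i : ℝ) ≤ X),
        1 / ∏ i, (q i : ℝ) ≥
        (1 / (Real.exp 1 * v * Real.log X / Real.log x)) * (∑ q ∈ P, 1 / (q : ℝ)) ^ ℓ := by
  classical
  have he1 : (1:ℝ) < Real.exp 1 := by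
    have := Real.exp_one_gt_d9; linarith
  have hx1 : (1:ℝ) < x := lt_of_lt_of_le he1 hx
  have hx0 : (0:ℝ) < x := by linarith
  have hu0 : (0:ℝ) < u := by linarith
  have hv0 : (0:ℝ) < v := by linarith
  have hlogx : (1:ℝ) ≤ Real.log x := by
    rw [show (1:ℝ) = Real.log (Real.exp 1) by simp]
    exact Real.log_le_log (Real.exp_pos 1) hx
  have hlogx0 : (0:ℝ) < Real.log x := by linarith
  -- X positivity and log bound
  have hxu0 : (0:ℝ) < x ^ (1/u) := Real.rpow_pos_of_pos hx0 _
  have hX0 : (0:ℝ) < X := lt_of_lt_of_le hxu0 hX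
  have hlogX : Real.log x / u ≤ Real.log X := by
    have := Real.log_le_log hxu0 hX
    rwa [Real.log_rpow hx0, one_div, inv_mul_eq_div] at this
  have hlogX0 : (0:ℝ) < Real.log X := lt_of_lt_of_le (by positivity) hlogX
  set K := Real.exp 1 * v * Real.log X / Real.log x with hKdef
  have hKe : Real.exp 1 ≤ K := by
    rw [hKdef]
    rw [le_div_iff₀ hlogx0]
    have h1 : Real.exp 1 * v * (Real.log x / u) ≤ Real.exp 1 * v * Real.log X :=
      mul_le_mul_of_nonneg_left hlogX (by positivity)
    have h2 : Real.exp 1 * Real.log x ≤ Real.exp 1 * v * (Real.log x / u) := by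
      have hvu : (1:ℝ) ≤ v / u := (one_le_div hu0).mpr huv
      have := mul_le_mul_of_nonneg_left hvu
        (by positivity : (0:ℝ) ≤ Real.exp 1 * Real.log x)
      calc Real.exp 1 * Real.log x = Real.exp 1 * Real.log x * 1 := by ring
        _ ≤ Real.exp 1 * Real.log x * (v / u) := this
        _ = Real.exp 1 * v * (Real.log x / u) := by ring
    linarith
  have hK0 : (0:ℝ) < K := lt_of_lt_of_le (by linarith) hKe
  set L := Nat.floor K with hLdef
  have hL1 : 1 ≤ L := Nat.le_floor (by push_cast; linarith)
  have hLK : (L:ℝ) ≤ K := Nat.floor_le (le_of_lt hK0)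
  have hKL : K < (L:ℝ) + 1 := Nat.lt_floor_add_one K
  have hL0 : (0:ℝ) < (L:ℝ) := by exact_mod_cast Nat.pos_of_ne_zero (by omega)
  set Y := X * x ^ (-(1/u)) with hYdef
  have hxnu0 : (0:ℝ) < x ^ (-(1/u)) := Real.rpow_pos_of_pos hx0 _
  have hY0 : (0:ℝ) < Y := by positivity
  have hY1 : (1:ℝ) ≤ Y := by
    rw [hYdef]
    calc (1:ℝ) = x ^ (1/u) * x ^ (-(1/u)) := by
          rw [← Real.rpow_add hx0]; norm_num
      _ ≤ X * x ^ (-(1/u)) := mul_le_mul_of_nonneg_right hX (le_of_lt hxnu0)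
  have h2 : ∀ q ∈ P, (q : ℝ) * Y ≤ X := by
    intro q hq
    have hqle := (hP q hq).2.2
    calc (q:ℝ) * Y ≤ x ^ (1/u) * Y := mul_le_mul_of_nonneg_right hqle (le_of_lt hY0)
      _ = X * (x ^ (1/u) * x ^ (-(1/u))) := by rw [hYdef]; ring
      _ = X := by rw [← Real.rpow_add hx0]; norm_num
  have hq1 : ∀ q ∈ P, (1:ℝ) < (q:ℝ) := by
    intro q hq
    have := (hP q hq).1.two_le
    exact_mod_cast by omega
  set S := ∑ q ∈ P, 1 / (q:ℝ) with hSdef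
  have hS0 : 0 < S := by
    apply Finset.sum_pos _ hPne
    intro q hq
    have := hq1 q hq
    positivity
  -- U L = 0
  have hUL : (∑ q ∈ (Fintype.piFinset fun _ : Fin L => P).filter
      (fun q => ∏ i, (q i : ℝ) ≤ Y), 1 / ∏ i, (q i : ℝ)) = 0 := by
    apply Finset.sum_eq_zero_iff_of_nonneg (fun q _ => by positivity) |>.mpr
    intro q hq
    exfalso
    rw [Finset.mem_filter, Fintype.mem_piFinset] at hq
    have hqlow : ∀ i : Fin L, x ^ (1 / (Real.exp 1 * v)) ≤ (q i : ℝ) :=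
      fun i => le_of_lt (hP _ (hq.1 i)).2.1
    have hprod : x ^ ((L:ℝ) / (Real.exp 1 * v)) ≤ ∏ i, (q i : ℝ) := by
      calc x ^ ((L:ℝ) / (Real.exp 1 * v))
          = ∏ _i : Fin L, x ^ (1 / (Real.exp 1 * v)) := by
            rw [Finset.prod_const, Finset.card_univ, Fintype.card_fin,
              ← Real.rpow_natCast (x ^ (1 / (Real.exp 1 * v))) L,
              ← Real.rpow_mul (le_of_lt hx0)]
            rw [show 1 / (Real.exp 1 * v) * (L:ℕ) = (L:ℝ) / (Real.exp 1 * v) by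
              push_cast; ring]
        _ ≤ ∏ i, (q i : ℝ) := Finset.prod_le_prod (fun i _ => by positivity)
            (fun i _ => hqlow i)
    have hYlt : Y < x ^ ((L:ℝ) / (Real.exp 1 * v)) := by
      rw [← Real.log_lt_log_iff hY0 (Real.rpow_pos_of_pos hx0 _)]
      rw [Real.log_rpow hx0, hYdef, Real.log_mul (ne_of_gt hX0) (ne_of_gt hxnu0),
        Real.log_rpow hx0]
      have hev : Real.exp 1 ≤ Real.exp 1 * v / u := by
        rw [le_div_iff₀ hu0]; nlinarith
      -- K = e v log X / log x, L > K - 1 > K - e v / u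
      have hKe2 : Real.exp 1 * v * Real.log X / Real.log x - Real.exp 1 * v / u < (L:ℝ) := by
        have : Real.exp 1 * v / u ≥ Real.exp 1 := hev
        have h3 : (1:ℝ) < Real.exp 1 * v / u := lt_of_lt_of_le he1 hev
        rw [← hKdef]
        linarith
      have := mul_lt_mul_of_pos_right hKe2 (by positivity : (0:ℝ) < Real.log x / (Real.exp 1 * v))
      rw [sub_mul] at this
      have e1 : Real.exp 1 * v * Real.log X / Real.log x * (Real.log x / (Real.exp 1 * v))
          = Real.log X := by field_simp
      have e2 : Real.exp 1 * v / u * (Real.log x / (Real.exp 1 * v)) = Real.log x / u := by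
        field_simp
      rw [e1, e2] at this
      have : Real.log X - Real.log x / u < (L:ℝ) * (Real.log x / (Real.exp 1 * v)) := this
      have e3 : (L:ℝ) * (Real.log x / (Real.exp 1 * v)) = (L:ℝ) / (Real.exp 1 * v) * Real.log x := by
        ring
      rw [e3] at this
      have e4 : -(1/u) * Real.log x = -(Real.log x / u) := by ring
      rw [e4]
      linarith
    linarith [hq.2, lt_of_lt_of_le hYlt hprod]
  -- main inequality
  have hmain := ind_lem P X Y hY1 h2 (le_of_lt hS0) L
  rw [hUL, zero_add] at hmain
  -- pigeonhole
  have hpig : ∃ ℓ ∈ Finset.range L, S ^ L / (L:ℝ) ≤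
      (∑ q ∈ (Fintype.piFinset fun _ : Fin (ℓ+1) => P).filter
        (fun q => Y < ∏ i, (q i : ℝ) ∧ ∏ i, (q i : ℝ) ≤ X), 1 / ∏ i, (q i : ℝ)) *
      S ^ (L - (ℓ+1)) := by
    apply Finset.exists_le_of_sum_le ⟨0, Finset.mem_range.mpr (by omega)⟩
    rw [Finset.sum_const, Finset.card_range, nsmul_eq_mul]
    rw [mul_div_cancel₀ _ (ne_of_gt hL0)]
    exact hmain
  obtain ⟨ℓ, hℓmem, hℓ⟩ := hpig
  rw [Finset.mem_range] at hℓmem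
  refine ⟨ℓ + 1, Nat.succ_pos ℓ, ?_, ?_⟩
  · calc ((ℓ+1 : ℕ):ℝ) ≤ (L:ℝ) := by exact_mod_cast Nat.succ_le_of_lt hℓmem
      _ ≤ K := hLK
  · rw [ge_iff_le]
    have hpow : S ^ L = S ^ (ℓ+1) * S ^ (L - (ℓ+1)) := by
      rw [← pow_add]
      congr 1
      omega
    have hstep1 : S ^ (ℓ+1) / (L:ℝ) ≤
        ∑ q ∈ (Fintype.piFinset fun _ : Fin (ℓ+1) => P).filter
          (fun q => Y < ∏ i, (q i : ℝ) ∧ ∏ i, (q i : ℝ) ≤ X), 1 / ∏ i, (q i : ℝ) := by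
      have hSm : (0:ℝ) < S ^ (L - (ℓ+1)) := pow_pos hS0 _
      rw [div_le_iff₀ hL0] at hℓ ⊢
      calc S ^ (ℓ+1) = S ^ L / S ^ (L - (ℓ+1)) := by
            rw [hpow, mul_div_cancel_right₀ _ (ne_of_gt hSm)]
        _ ≤ _ := by
            rw [div_le_iff₀ hSm]
            calc S ^ L ≤ (∑ q ∈ (Fintype.piFinset fun _ : Fin (ℓ+1) => P).filter
                (fun q => Y < ∏ i, (q i : ℝ) ∧ ∏ i, (q i : ℝ) ≤ X), 1 / ∏ i, (q i : ℝ)) *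
                S ^ (L - (ℓ+1)) * (L:ℝ) := by linarith
              _ = _ := by ring
    calc 1 / K * S ^ (ℓ+1) ≤ 1 / (L:ℝ) * S ^ (ℓ+1) := by
          apply mul_le_mul_of_nonneg_right _ (le_of_lt (pow_pos hS0 _))
          apply one_div_le_one_div_of_le hL0 hLK
      _ = S ^ (ℓ+1) / (L:ℝ) := by ring
      _ ≤ _ := hstep1
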